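/- The number of RGFs of length n with maximal letter k that avoid the pattern 1/2/3 is 1 if k = 1, equals 2^{n-1} − 1 if k = 2 (namely all words of 1s and 2s starting with 1 and containing at least one 2), and is 0 if k > 2. -/

import Mathlib

/-- The list of distinct letters of `u` in order of first occurrence. -/
def distinctsAux (u : List ℕ) : List ℕ :=
  u.foldl (fun acc x => if x ∈ acc then acc else acc ++ [x]) []

/-- The standardization of a word: relabel letters by order of first occurrence,
starting from `1`.  This is the restricted growth function of the set partition
determined by letter-equality, with blocks ordered by minima. -/
def stdWord (u : List ℕ) : List ℕ :=
  u.map (fun x => (distinctsAux u).idxOf x + 1)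

/-- `w` is a restricted growth function: each letter is a positive integer,
the first letter is `1`, and every letter is at most one more than the maximum
of the preceding letters. -/
def IsRGF (w : List ℕ) : Prop :=
  ∀ i : ℕ, ∀ h : i < w.length,
    1 ≤ w.get ⟨i, h⟩ ∧ w.get ⟨i, h⟩ ≤ ((w.take i).foldr max 0) + 1

/-- `w` avoids the pattern (RGF word) `v`: no subsequence of `w` standardizes to `v`.
This encodes set-partition pattern avoidance via the bijection with RGFs. -/
def AvoidsPat (w v : List ℕ) : Prop :=
  ¬ ∃ s : List ℕ, s.Sublist w ∧ stdWord s = v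

/-! ### Auxiliary lemmas -/

private lemma le_foldr_max {l : List ℕ} {x : ℕ} (h : x ∈ l) : x ≤ l.foldr max 0 := by
  induction l with
  | nil => simp at h
  | cons a t ih =>
    rcases List.mem_cons.1 h with rfl | h
    · exact le_max_left _ _
    · exact le_trans (ih h) (le_max_right _ _)

private lemma foldr_max_le {l : List ℕ} {m : ℕ} (h : ∀ x ∈ l, x ≤ m) : l.foldr max 0 ≤ m := by
  induction l with
  | nil => simp
  | cons a t ih =>
    simp only [List.foldr_cons, max_le_iff]
    exact ⟨h a (by simp), ih fun x hx => h x (by simp [hx])⟩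

private lemma foldr_max_mem {l : List ℕ} (h : l.foldr max 0 ≠ 0) : l.foldr max 0 ∈ l := by
  induction l with
  | nil => simp at h
  | cons a t ih =>
    simp only [List.foldr_cons] at h ⊢
    rcases max_choice a (t.foldr max 0) with h1 | h1 <;> rw [h1] at h ⊢
    · exact List.mem_cons_self
    · exact List.mem_cons_of_mem _ (ih h)

private lemma letters_bound {w : List ℕ} (hr : IsRGF w) {x : ℕ} (hx : x ∈ w) :
    1 ≤ x ∧ x ≤ w.foldr max 0 := by
  refine ⟨?_, le_foldr_max hx⟩
  obtain ⟨i, hi, rfl⟩ := List.mem_iff_getElem.1 hx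
  simpa using (hr i hi).1

/-! ### The growth predicate -/

private def Grow (m : ℕ) (l : List ℕ) : Prop :=
  ∀ i : ℕ, ∀ h : i < l.length, l.get ⟨i, h⟩ ≤ max m ((l.take i).foldr max 0) + 1

private lemma grow_cons {m x : ℕ} {t : List ℕ} :
    Grow m (x :: t) ↔ x ≤ m + 1 ∧ Grow (max m x) t := by
  constructor
  · intro h
    refine ⟨by simpa using h 0 (by simp), fun i hi => ?_⟩
    have := h (i + 1) (by simpa using Nat.succ_lt_succ hi)
    simpa [max_assoc] using this
  · rintro ⟨h0, h1⟩ i hi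
    cases i with
    | zero => simpa using h0
    | succ j =>
      have := h1 j (by simpa using Nat.lt_of_succ_lt_succ hi)
      simpa [max_assoc] using this

private lemma isRGF_grow {w : List ℕ} (h : IsRGF w) : Grow 0 w := by
  intro i hi
  simpa [Nat.zero_max] using (h i hi).2

private lemma grow_range'_sublist : ∀ (l : List ℕ) (m : ℕ), Grow m l →
    (List.range' (m + 1) (l.foldr max 0 - m)).Sublist l := by
  intro l
  induction l with
  | nil => intro m _; simp
  | cons x t ih =>
    intro m h
    rcases grow_cons.1 h with ⟨hx, ht⟩
    simp only [List.foldr_cons]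
    by_cases hxm : x ≤ m
    · have hm : max m x = m := max_eq_left hxm
      rw [hm] at ht
      have := (ih m ht).cons x
      have he : max x (t.foldr max 0) - m = t.foldr max 0 - m := by omega
      rwa [he]
    · have hx1 : x = m + 1 := by omega
      subst hx1
      have hm : max m (m + 1) = m + 1 := by omega
      rw [hm] at ht
      have hsub := (ih (m + 1) ht).cons₂ (m + 1)
      have he : max (m + 1) (t.foldr max 0) - m = (t.foldr max 0 - (m + 1)) + 1 := by omega
      rw [he, List.range'_succ]
      exact hsub

/-! ### distinctsAux properties -/

private lemma foldl_ins (u : List ℕ) : ∀ acc : List ℕ,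
    (acc.Nodup → (u.foldl (fun acc x => if x ∈ acc then acc else acc ++ [x]) acc).Nodup) ∧
    (∀ x ∈ u.foldl (fun acc x => if x ∈ acc then acc else acc ++ [x]) acc, x ∈ acc ∨ x ∈ u) ∧
    (∀ x, x ∈ acc ∨ x ∈ u → x ∈ u.foldl (fun acc x => if x ∈ acc then acc else acc ++ [x]) acc) := by
  induction u with
  | nil => intro acc; simp
  | cons a t ih =>
    intro acc
    simp only [List.foldl_cons]
    by_cases ha : a ∈ acc
    · rw [if_pos ha]
      obtain ⟨i1, i2, i3⟩ := ih acc
      refine ⟨i1, fun x hx => ?_, fun x hx => ?_⟩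
      · rcases i2 x hx with h | h
        · exact Or.inl h
        · exact Or.inr (List.mem_cons_of_mem _ h)
      · rcases hx with h | h
        · exact i3 x (Or.inl h)
        · rcases List.mem_cons.1 h with rfl | h
          · exact i3 x (Or.inl ha)
          · exact i3 x (Or.inr h)
    · rw [if_neg ha]
      obtain ⟨i1, i2, i3⟩ := ih (acc ++ [a])
      refine ⟨fun hnd => i1 ?_, fun x hx => ?_, fun x hx => ?_⟩
      · simp [List.nodup_append, hnd, ha]; rintro y hy rfl; exact ha hy
      · rcases i2 x hx with h | h
        · rcases List.mem_append.1 h with h | h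
          · exact Or.inl h
          · simp at h; exact Or.inr (by simp [h])
        · exact Or.inr (List.mem_cons_of_mem _ h)
      · rcases hx with h | h
        · exact i3 x (Or.inl (List.mem_append.2 (Or.inl h)))
        · rcases List.mem_cons.1 h with rfl | h
          · exact i3 x (Or.inl (by simp))
          · exact i3 x (Or.inr h)

private lemma avoids_of_letters {w : List ℕ} (h : ∀ x ∈ w, x = 1 ∨ x = 2) :
    AvoidsPat w [1, 2, 3] := by
  rintro ⟨s, hs, hstd⟩
  have hlen : s.length = 3 := by
    have := congrArg List.length hstd
    simpa [stdWord] using this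
  obtain ⟨a, b, c, rfl⟩ : ∃ a b c, s = [a, b, c] := by
    match s, hlen with
    | [a, b, c], _ => exact ⟨a, b, c, rfl⟩
  have hsub : ∀ x ∈ [a, b, c], x = 1 ∨ x = 2 := fun x hx => h x (hs.subset hx)
  simp only [stdWord, List.map_cons, List.map_nil, List.cons.injEq, and_true] at hstd
  obtain ⟨h1, h2, h3⟩ := hstd
  set d := distinctsAux [a, b, c] with hd_def
  obtain ⟨i1, i2, i3⟩ := foldl_ins [a, b, c] []
  have hnd : d.Nodup := i1 (by simp)
  have hdl : d.length ≤ 2 := by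
    have hsubd : d ⊆ [1, 2] := by
      intro x hx
      rcases i2 x hx with hx' | hx'
      · simp at hx'
      · rcases hsub x hx' with rfl | rfl <;> simp
    simpa using (hnd.subperm hsubd).length_le
  have hc : c ∈ d := i3 c (Or.inr (by simp))
  have := List.idxOf_lt_length_iff.2 hc
  omega

private def enc (b : List Bool) : List ℕ := 1 :: b.map (fun x => cond x 2 1)

private lemma enc_injective : Function.Injective enc := by
  intro b1 b2 h
  simp only [enc, List.cons.injEq, true_and] at h
  exact List.map_injective_iff.2 (by decide) h

theorem stmt8 (n : ℕ) (hn : 1 ≤ n) :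
    Set.ncard {w : List ℕ | IsRGF w ∧ w.length = n ∧ w.foldr max 0 = 1 ∧
        AvoidsPat w [1, 2, 3]} = 1 ∧
    Set.ncard {w : List ℕ | IsRGF w ∧ w.length = n ∧ w.foldr max 0 = 2 ∧
        AvoidsPat w [1, 2, 3]} = 2 ^ (n - 1) - 1 ∧
    ∀ k : ℕ, 2 < k →
      Set.ncard {w : List ℕ | IsRGF w ∧ w.length = n ∧ w.foldr max 0 = k ∧
        AvoidsPat w [1, 2, 3]} = 0 := by
  refine ⟨?_, ?_, ?_⟩
  · -- k = 1
    have hset : {w : List ℕ | IsRGF w ∧ w.length = n ∧ w.foldr max 0 = 1 ∧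
        AvoidsPat w [1, 2, 3]} = {List.replicate n 1} := by
      ext w
      simp only [Set.mem_setOf_eq, Set.mem_singleton_iff]
      constructor
      · rintro ⟨hr, hlen, hmax, _⟩
        refine List.eq_replicate_iff.2 ⟨hlen, fun b hb => ?_⟩
        obtain ⟨h1, h2⟩ := letters_bound hr hb
        omega
      · rintro rfl
        have hmem : ∀ x ∈ List.replicate n (1 : ℕ), x = 1 := fun x hx =>
          (List.mem_replicate.1 hx).2
        refine ⟨?_, by simp, ?_, avoids_of_letters fun x hx => Or.inl (hmem x hx)⟩
        · intro i hi
          have : (List.replicate n (1 : ℕ)).get ⟨i, hi⟩ = 1 := by simp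
          rw [this]
          exact ⟨le_refl _, Nat.succ_le_succ (Nat.zero_le _)⟩
        · have h1 : (1 : ℕ) ∈ List.replicate n (1 : ℕ) :=
            List.mem_replicate.2 ⟨by omega, rfl⟩
          have hle := foldr_max_le (fun x hx => le_of_eq (hmem x hx))
          have hge := le_foldr_max h1
          omega
    rw [hset, Set.ncard_singleton]
  · -- k = 2
    have hset : {w : List ℕ | IsRGF w ∧ w.length = n ∧ w.foldr max 0 = 2 ∧
        AvoidsPat w [1, 2, 3]}
        = enc '' {b : List Bool | b.length = n - 1 ∧ true ∈ b} := by
      ext w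
      simp only [Set.mem_setOf_eq, Set.mem_image]
      constructor
      · rintro ⟨hr, hlen, hmax, _⟩
        have hlet : ∀ x ∈ w, x = 1 ∨ x = 2 := by
          intro x hx
          obtain ⟨h1, h2⟩ := letters_bound hr hx
          omega
        obtain ⟨a, t, rfl⟩ : ∃ a t, w = a :: t := by
          cases w with
          | nil => simp at hlen; omega
          | cons a t => exact ⟨a, t, rfl⟩
        have ha : a = 1 := by
          have := (hr 0 (by simp)).2
          simp at this
          have h1 := (hr 0 (by simp)).1
          simp at h1
          omega
        subst ha
        have h2w : (2 : ℕ) ∈ 1 :: t := by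
          rw [← hmax]; exact foldr_max_mem (by rw [hmax]; omega)
        have h2t : (2 : ℕ) ∈ t := by
          rcases List.mem_cons.1 h2w with h | h
          · omega
          · exact h
        refine ⟨t.map (fun x => decide (x = 2)), ⟨by simp at hlen ⊢; omega, ?_⟩, ?_⟩
        · simp only [List.mem_map]
          exact ⟨2, h2t, by simp⟩
        · simp only [enc, List.map_map, List.cons.injEq, true_and]
          conv_rhs => rw [← List.map_id t]
          refine List.map_congr_left fun x hx => ?_
          rcases hlet x (List.mem_cons_of_mem _ hx) with rfl | rfl <;> rfl
      · rintro ⟨b, ⟨hblen, hbtrue⟩, rfl⟩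
        have hmem : ∀ x ∈ enc b, x = 1 ∨ x = 2 := by
          intro x hx
          rcases List.mem_cons.1 hx with rfl | hx
          · exact Or.inl rfl
          · obtain ⟨y, _, rfl⟩ := List.mem_map.1 hx
            cases y
            · exact Or.inl rfl
            · exact Or.inr rfl
        have h2mem : (2 : ℕ) ∈ enc b :=
          List.mem_cons_of_mem _ (List.mem_map.2 ⟨true, hbtrue, rfl⟩)
        refine ⟨?_, ?_, ?_, avoids_of_letters hmem⟩
        · intro i hi
          cases i with
          | zero =>
            have : (enc b).get ⟨0, hi⟩ = 1 := rfl
            rw [this]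
            exact ⟨le_refl _, Nat.succ_le_succ (Nat.zero_le _)⟩
          | succ j =>
            have hget : (enc b).get ⟨j + 1, hi⟩ ∈ enc b := List.get_mem _ _
            have hb := hmem _ hget
            have h1 : (1 : ℕ) ∈ (enc b).take (j + 1) := by
              have : (enc b).take (j + 1) = 1 :: (b.map (fun x => cond x 2 1)).take j := by
                simp [enc]
              rw [this]; exact List.mem_cons_self
            have hle := le_foldr_max h1
            constructor
            · omega
            · omega
        · simp only [enc, List.length_cons, List.length_map, hblen]
          omega
        · have hle : (enc b).foldr max 0 ≤ 2 :=
            foldr_max_le fun x hx => by rcases hmem x hx with rfl | rfl <;> omega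
          have hge := le_foldr_max h2mem
          omega
    rw [hset, Set.ncard_image_of_injective _ enc_injective]
    have hB : {b : List Bool | b.length = n - 1 ∧ true ∈ b}
        = {b : List Bool | b.length = n - 1} \ {List.replicate (n - 1) false} := by
      ext b
      simp only [Set.mem_setOf_eq, Set.mem_diff, Set.mem_singleton_iff]
      constructor
      · rintro ⟨h1, h2⟩
        refine ⟨h1, ?_⟩
        rintro rfl
        simp [List.mem_replicate] at h2
      · rintro ⟨h1, h2⟩
        refine ⟨h1, ?_⟩
        by_contra h3
        exact h2 (List.eq_replicate_iff.2 ⟨h1, fun x hx => by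
          cases x
          · rfl
          · exact absurd hx h3⟩)
    have eL : ↥{b : List Bool | b.length = n - 1} ≃ List.Vector Bool (n - 1) :=
      Equiv.subtypeEquivRight fun _ => Iff.rfl
    have hLfin : {b : List Bool | b.length = n - 1}.Finite := by
      have : Finite ↥{b : List Bool | b.length = n - 1} := Finite.of_equiv _ eL.symm
      exact Set.toFinite _
    have hLcard : {b : List Bool | b.length = n - 1}.ncard = 2 ^ (n - 1) := by
      rw [← Nat.card_coe_set_eq, Nat.card_congr eL, Nat.card_eq_fintype_card,
        card_vector]
      simp
    rw [hB, Set.ncard_diff_singleton_of_mem (by simp : List.replicate (n - 1) false ∈ {b : List Bool | b.length = n - 1}), hLcard]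
  · -- k > 2
    intro k hk
    have hset : {w : List ℕ | IsRGF w ∧ w.length = n ∧ w.foldr max 0 = k ∧
        AvoidsPat w [1, 2, 3]} = ∅ := by
      ext w
      simp only [Set.mem_setOf_eq, Set.mem_empty_iff_false, iff_false, not_and]
      intro hr hlen hmax
      intro hav
      apply hav
      refine ⟨[1, 2, 3], ?_, by decide⟩
      have hsub : (List.range' 1 (w.foldr max 0)).Sublist w := by
        simpa using grow_range'_sublist w 0 (isRGF_grow hr)
      rw [hmax] at hsub
      have h123 : ([1, 2, 3] : List ℕ).Sublist (List.range' 1 k) := by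
        have he : List.range' 1 3 ++ List.range' 4 (k - 3) = List.range' 1 k := by
          have := List.range'_append (s := 1) (m := 3) (n := k - 3) (step := 1)
          norm_num at this
          rw [this]
          congr 1
          omega
        rw [← he]
        exact List.sublist_append_left _ _
      exact h123.trans hsub
    rw [hset, Set.ncard_empty]
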